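/- Under the standing conventions, the ideal L(𝔄; k) generated by all products U_{f_1}U_{f_2}⋯U_{f_k} with f_1 ≤ f_2 ≤ ⋯ ≤ f_k in 𝔄 is weakly polymatroidal for every k ≥ 1. -/

import Mathlib

open MvPolynomial

section
open Finset

namespace Stmt9Aux

lemma prod_monomial_one {K σ ι : Type*} [Field K] (s : Finset ι) (d : ι → (σ →₀ ℕ)) :
    ∏ j ∈ s, (monomial (d j) (1 : K)) = monomial (∑ j ∈ s, d j) 1 := by
  classical
  induction s using Finset.induction with
  | empty => simp
  | insert _ _ h ih => rw [Finset.prod_insert h, Finset.sum_insert h, ih, monomial_mul, one_mul]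

lemma card_filter_le_eq_sum {k n : ℕ} (v : Fin k → Fin n) (a : Fin n) :
    (univ.filter fun j => v j ≤ a).card
      = ∑ a' ∈ Iic a, (univ.filter fun j => v j = a').card := by
  simp only [Finset.card_filter]
  rw [Finset.sum_comm]
  refine Finset.sum_congr rfl fun j _ => ?_
  simp only [eq_comm (a := v j)]
  rw [Finset.sum_ite_eq' (Iic a) (v j) (fun _ => 1)]
  simp

lemma mono_prefix {k n : ℕ} (v : Fin k → Fin n) (hv : Monotone v) (j : Fin k) (a : Fin n) :
    v j ≤ a ↔ (j : ℕ) < (univ.filter fun j' => v j' ≤ a).card := by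
  constructor
  · intro h
    have hsub : Finset.Iic j ⊆ univ.filter (fun j' => v j' ≤ a) := by
      intro j' hj'
      simp only [Finset.mem_Iic] at hj'
      simp only [Finset.mem_filter, Finset.mem_univ, true_and]
      exact le_trans (hv hj') h
    have := Finset.card_le_card hsub
    rw [Fin.card_Iic] at this
    omega
  · intro h
    by_contra hja
    have hsub : univ.filter (fun j' => v j' ≤ a) ⊆ Finset.Iio j := by
      intro j' hj'
      simp only [Finset.mem_filter, Finset.mem_univ, true_and] at hj'
      simp only [Finset.mem_Iio]
      by_contra hlt
      exact hja (le_trans (hv (not_lt.mp hlt)) hj')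
    have := Finset.card_le_card hsub
    rw [Fin.card_Iio] at this
    omega

noncomputable def DV {k m n : ℕ} (F : Fin k → Fin m → Fin n) : (Fin m × Fin n) →₀ ℕ :=
  ∑ j : Fin k, ∑ i : Fin m, Finsupp.single (i, F j i) 1

lemma DV_apply {k m n : ℕ} (F : Fin k → Fin m → Fin n) (i : Fin m) (a : Fin n) :
    DV F (i, a) = (univ.filter fun j => F j i = a).card := by
  classical
  simp only [DV, Finsupp.finset_sum_apply, Finsupp.single_apply, Finset.card_filter,
    Prod.mk.injEq, ite_and]
  refine Finset.sum_congr rfl fun j _ => ?_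
  rw [Finset.sum_ite_eq' univ i (fun x => if F j x = a then 1 else 0)]
  simp

lemma weight_DV {k m n : ℕ} (F : Fin k → Fin m → Fin n) :
    ∑ x : Fin m × Fin n, DV F x = k * m := by
  classical
  simp only [DV, Finsupp.finset_sum_apply]
  rw [Finset.sum_comm]
  have : ∀ j : Fin k, ∑ x : Fin m × Fin n, ∑ i : Fin m, Finsupp.single (i, F j i) 1 x = m := by
    intro j
    rw [Finset.sum_comm]
    have : ∀ i : Fin m, ∑ x : Fin m × Fin n, (Finsupp.single ((i, F j i) : Fin m × Fin n) 1) x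
        = 1 := by
      intro i
      simp [Finsupp.single_apply]
    simp [this]
  simp [this, mul_comm]

lemma prodX {K : Type*} [Field K] {k m n : ℕ} (F : Fin k → Fin m → Fin n) :
    (∏ j : Fin k, ∏ i : Fin m, (X (i, F j i) : MvPolynomial (Fin m × Fin n) K))
      = monomial (DV F) 1 := by
  have hinner : ∀ j : Fin k, (∏ i : Fin m, (X (i, F j i) : MvPolynomial (Fin m × Fin n) K))
      = monomial (∑ i : Fin m, Finsupp.single ((i, F j i) : Fin m × Fin n) 1) 1 := by
    intro j
    rw [← prod_monomial_one]
    rfl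
  simp only [hinner]
  rw [prod_monomial_one]
  rfl

lemma le_of_le_weight {σ : Type*} [Fintype σ] {d' d : σ →₀ ℕ} (h : d' ≤ d)
    (hw : ∑ x : σ, d x ≤ ∑ x : σ, d' x) : d' = d := by
  classical
  have hx : ∀ x, d' x ≤ d x := fun x => Finsupp.le_def.mp h x
  ext x
  by_contra hne
  have hlt : d' x < d x := lt_of_le_of_ne (hx x) hne
  have : ∑ y : σ, d' y < ∑ y : σ, d y :=
    Finset.sum_lt_sum (fun y _ => hx y) ⟨x, Finset.mem_univ x, hlt⟩
  omega

end Stmt9Aux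

end

/-- `d` is (the exponent vector of) a minimal monomial generator of `I`. -/
def IsMinGen {K : Type} [Field K] {σ : Type} (I : Ideal (MvPolynomial σ K))
    (d : σ →₀ ℕ) : Prop :=
  (monomial d (1 : K)) ∈ I ∧
    ∀ d' : σ →₀ ℕ, d' ≤ d → (monomial d' (1 : K)) ∈ I → d' = d

/-- Weak polymatroidality with respect to the order `x > y ↔ ord x < ord y`. -/
def WeaklyPolymatroidal {K : Type} [Field K] {σ : Type} (ord : σ → ℕ)
    (I : Ideal (MvPolynomial σ K)) : Prop :=
  ∀ d e : σ →₀ ℕ, IsMinGen I d → IsMinGen I e →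
    ∀ q : σ, (∀ x : σ, ord x < ord q → d x = e x) → d q < e q →
      ∃ p : σ, ord q < ord p ∧ 0 < d p ∧
        IsMinGen I (d + Finsupp.single q 1 - Finsupp.single p 1)

/-- the ideal `L(𝔄; k)` generated by the products
`U_{f₁}⋯U_{f_k}` over weakly increasing chains `f₁ ≤ ⋯ ≤ f_k` in `𝔄` is
weakly polymatroidal for every `k ≥ 1`, with respect to the variable order
`X_{p₁,1} > ⋯ > X_{p₁,n} > X_{p₂,1} > ⋯ > X_{pₘ,n}`. -/
theorem stmt9 (K : Type) [Field K] (m n : ℕ) (r : Fin m → Fin m → Prop)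
    (hrefl : ∀ i, r i i) (htrans : ∀ i j k, r i j → r j k → r i k)
    (hcompat : ∀ i j, r i j → i ≤ j)
    (A : Fin m → Finset (Fin n)) (hA : ∀ i, (A i).Nonempty)
    (𝔄 : Set (Fin m → Fin n)) (h𝔄ne : 𝔄.Nonempty)
    (hsub : ∀ f ∈ 𝔄, (∀ i, f i ∈ A i) ∧ (∀ i j, r i j → f i ≤ f j))
    (hdown : ∀ f ∈ 𝔄, ∀ g : Fin m → Fin n, (∀ i, g i ∈ A i) →
      (∀ i j, r i j → g i ≤ g j) → (∀ i, g i ≤ f i) → g ∈ 𝔄)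
    (k : ℕ) (hk : 1 ≤ k) :
    WeaklyPolymatroidal (fun x : Fin m × Fin n => (x.1 : ℕ) * n + (x.2 : ℕ))
      (Ideal.span {p : MvPolynomial (Fin m × Fin n) K |
        ∃ F : Fin k → (Fin m → Fin n),
          (∀ j, F j ∈ 𝔄) ∧
          (∀ j j' : Fin k, j ≤ j' → ∀ i, F j i ≤ F j' i) ∧
          p = ∏ j : Fin k, ∏ i : Fin m, X (i, F j i)}) := by
  classical
  set T : Set ((Fin m × Fin n) →₀ ℕ) :=
    {s | ∃ F : Fin k → (Fin m → Fin n), (∀ j, F j ∈ 𝔄) ∧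
      (∀ j j' : Fin k, j ≤ j' → ∀ i, F j i ≤ F j' i) ∧ s = Stmt9Aux.DV F} with hT
  have hset : {p : MvPolynomial (Fin m × Fin n) K |
      ∃ F : Fin k → (Fin m → Fin n),
        (∀ j, F j ∈ 𝔄) ∧
        (∀ j j' : Fin k, j ≤ j' → ∀ i, F j i ≤ F j' i) ∧
        p = ∏ j : Fin k, ∏ i : Fin m, X (i, F j i)}
      = (fun s => monomial s (1 : K)) '' T := by
    ext p
    simp only [Set.mem_setOf_eq, Set.mem_image, hT]
    constructor
    · rintro ⟨F, h1, h2, rfl⟩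
      exact ⟨Stmt9Aux.DV F, ⟨F, h1, h2, rfl⟩, (Stmt9Aux.prodX F).symm⟩
    · rintro ⟨s, ⟨F, h1, h2, rfl⟩, rfl⟩
      exact ⟨F, h1, h2, (Stmt9Aux.prodX F).symm⟩
  set I : Ideal (MvPolynomial (Fin m × Fin n) K) := Ideal.span
      {p : MvPolynomial (Fin m × Fin n) K |
        ∃ F : Fin k → (Fin m → Fin n),
          (∀ j, F j ∈ 𝔄) ∧
          (∀ j j' : Fin k, j ≤ j' → ∀ i, F j i ≤ F j' i) ∧
          p = ∏ j : Fin k, ∏ i : Fin m, X (i, F j i)} with hI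
  have hmem : ∀ s : (Fin m × Fin n) →₀ ℕ,
      monomial s (1 : K) ∈ I ↔ ∃ t ∈ T, t ≤ s := by
    intro s
    rw [hI, hset, mem_ideal_span_monomial_image]
    rw [support_monomial]
    simp [one_ne_zero]
  have hweight : ∀ t ∈ T, ∑ x : Fin m × Fin n, t x = k * m := by
    rintro t ⟨F, _, _, rfl⟩
    exact Stmt9Aux.weight_DV F
  have hmin : ∀ s : (Fin m × Fin n) →₀ ℕ, IsMinGen I s ↔ s ∈ T := by
    intro s
    constructor
    · rintro ⟨hmem', hminimal⟩
      obtain ⟨t, htT, hts⟩ := (hmem s).mp hmem'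
      have := hminimal t hts ((hmem t).mpr ⟨t, htT, le_rfl⟩)
      rwa [← this]
    · intro hsT
      refine ⟨(hmem s).mpr ⟨s, hsT, le_rfl⟩, fun d' hle hd' => ?_⟩
      obtain ⟨t, htT, htd'⟩ := (hmem d').mp hd'
      refine Stmt9Aux.le_of_le_weight hle ?_
      calc ∑ x : Fin m × Fin n, s x = k * m := hweight s hsT
        _ = ∑ x : Fin m × Fin n, t x := (hweight t htT).symm
        _ ≤ ∑ x : Fin m × Fin n, d' x :=
          Finset.sum_le_sum fun x _ => Finsupp.le_def.mp htd' x
  intro d e hd he q hagree hdq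
  obtain ⟨i, a⟩ := q
  obtain ⟨F, hF𝔄, hFmono, hdD⟩ := (hmin d).mp hd
  obtain ⟨G, hG𝔄, hGmono, heD⟩ := (hmin e).mp he
  have hFi : ∀ i₀ : Fin m, Monotone (fun j => F j i₀) := fun i₀ j j' h => hFmono j j' h i₀
  have hGi : ∀ i₀ : Fin m, Monotone (fun j => G j i₀) := fun i₀ j j' h => hGmono j j' h i₀
  have hdcard : ∀ (i₀ : Fin m) (b : Fin n),
      d (i₀, b) = (Finset.univ.filter fun j => F j i₀ = b).card := by
    intro i₀ b; rw [hdD, Stmt9Aux.DV_apply]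
  have hecard : ∀ (i₀ : Fin m) (b : Fin n),
      e (i₀, b) = (Finset.univ.filter fun j => G j i₀ = b).card := by
    intro i₀ b; rw [heD, Stmt9Aux.DV_apply]
  -- prefix counts at (i, a)
  have hPdPe : (Finset.univ.filter fun j => F j i ≤ a).card
      < (Finset.univ.filter fun j => G j i ≤ a).card := by
    rw [Stmt9Aux.card_filter_le_eq_sum, Stmt9Aux.card_filter_le_eq_sum]
    refine Finset.sum_lt_sum (fun a' ha' => ?_) ⟨a, Finset.mem_Iic.mpr le_rfl, ?_⟩
    · rcases eq_or_lt_of_le (Finset.mem_Iic.mp ha') with h | h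
      · subst h
        rw [← hdcard, ← hecard]; exact le_of_lt hdq
      · rw [← hdcard, ← hecard]
        have := hagree (i, a') (by
          show (i : ℕ) * n + (a' : ℕ) < (i : ℕ) * n + (a : ℕ)
          have : (a' : ℕ) < (a : ℕ) := h
          omega)
        omega
    · rw [← hdcard, ← hecard]; exact hdq
  -- existence of j with a < F j i
  have hex : ∃ j, a < F j i := by
    by_contra hcon
    push_neg at hcon
    have : (Finset.univ.filter fun j => F j i ≤ a) = Finset.univ :=
      Finset.filter_true_of_mem fun j _ => hcon j
    have hle : (Finset.univ.filter fun j => G j i ≤ a).card ≤ k := by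
      calc (Finset.univ.filter fun j => G j i ≤ a).card ≤ Finset.univ.card :=
            Finset.card_filter_le _ _
        _ = k := by simp
    rw [this] at hPdPe
    simp at hPdPe
    omega
  set J : Finset (Fin k) := Finset.univ.filter (fun j => a < F j i) with hJ
  have hJne : J.Nonempty := by
    obtain ⟨j, hj⟩ := hex
    exact ⟨j, by simp [hJ, hj]⟩
  set j : Fin k := J.min' hJne with hjdef
  have hj : a < F j i := by
    have := J.min'_mem hJne
    simp only [hJ, Finset.mem_filter] at this
    exact this.2
  have hjmin : ∀ j'', j'' < j → F j'' i ≤ a := by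
    intro j'' hlt
    by_contra hcon
    have : j'' ∈ J := by simp [hJ, not_le.mp hcon]
    exact absurd (J.min'_le j'' this) (not_le.mpr hlt)
  -- prefix card of F at a equals j
  have hPd_eq : (Finset.univ.filter fun j' => F j' i ≤ a).card = (j : ℕ) := by
    have hfe : (Finset.univ.filter fun j' => F j' i ≤ a) = Finset.Iio j := by
      ext j'
      simp only [Finset.mem_filter, Finset.mem_univ, true_and, Finset.mem_Iio]
      constructor
      · intro h
        by_contra hcon
        exact absurd h (not_le.mpr (lt_of_lt_of_le hj (hFi i (not_lt.mp hcon))))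
      · exact hjmin j'
    rw [hfe, Fin.card_Iio]
  have hGja : G j i ≤ a := by
    refine (Stmt9Aux.mono_prefix (fun j' => G j' i) (hGi i) j a).mpr ?_
    rw [hPd_eq] at hPdPe
    exact hPdPe
  -- values on lower components agree
  have hlow : ∀ i₀ : Fin m, (i₀ : ℕ) < (i : ℕ) → F j i₀ = G j i₀ := by
    intro i₀ hi₀
    have hcnt : ∀ b : Fin n, (Finset.univ.filter fun j' => F j' i₀ ≤ b).card
        = (Finset.univ.filter fun j' => G j' i₀ ≤ b).card := by
      intro b
      rw [Stmt9Aux.card_filter_le_eq_sum, Stmt9Aux.card_filter_le_eq_sum]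
      refine Finset.sum_congr rfl fun b' _ => ?_
      rw [← hdcard, ← hecard]
      refine hagree (i₀, b') ?_
      show (i₀ : ℕ) * n + (b' : ℕ) < (i : ℕ) * n + (a : ℕ)
      have hb' : (b' : ℕ) < n := b'.isLt
      have hmul : ((i₀ : ℕ) + 1) * n ≤ (i : ℕ) * n := Nat.mul_le_mul_right n hi₀
      have hexp : ((i₀ : ℕ) + 1) * n = (i₀ : ℕ) * n + n := by ring
      omega
    have h1 : F j i₀ ≤ G j i₀ := by
      refine (Stmt9Aux.mono_prefix (fun j' => F j' i₀) (hFi i₀) j (G j i₀)).mpr ?_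
      rw [hcnt]
      exact (Stmt9Aux.mono_prefix (fun j' => G j' i₀) (hGi i₀) j (G j i₀)).mp le_rfl
    have h2 : G j i₀ ≤ F j i₀ := by
      refine (Stmt9Aux.mono_prefix (fun j' => G j' i₀) (hGi i₀) j (F j i₀)).mpr ?_
      rw [← hcnt]
      exact (Stmt9Aux.mono_prefix (fun j' => F j' i₀) (hFi i₀) j (F j i₀)).mp le_rfl
    exact le_antisymm h1 h2
  have hane : a ≠ F j i := ne_of_lt hj
  refine ⟨(i, F j i), ?_, ?_, ?_⟩
  · show (i : ℕ) * n + (a : ℕ) < (i : ℕ) * n + ((F j i : Fin n) : ℕ)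
    have : (a : ℕ) < ((F j i : Fin n) : ℕ) := hj
    omega
  · show 0 < d (i, F j i)
    rw [hdcard]
    exact Finset.card_pos.mpr ⟨j, by simp⟩
  · set F' : Fin k → Fin m → Fin n :=
      fun j'' i'' => if j'' = j ∧ i'' = i then a else F j'' i'' with hF'
    have hF'ne : ∀ (j'' : Fin k) (i'' : Fin m), j'' ≠ j → F' j'' i'' = F j'' i'' := by
      intro j'' i'' h; simp [hF', h]
    have hF'ni : ∀ (j'' : Fin k) (i'' : Fin m), i'' ≠ i → F' j'' i'' = F j'' i'' := by
      intro j'' i'' h; simp [hF', h]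
    have hF'j : F' j i = a := by simp [hF']
    have haA : a ∈ A i := by
      have hpos : 0 < e (i, a) := lt_of_le_of_lt (Nat.zero_le _) hdq
      rw [hecard] at hpos
      obtain ⟨j₀, hj₀⟩ := Finset.card_pos.mp hpos
      simp only [Finset.mem_filter, Finset.mem_univ, true_and] at hj₀
      have := (hsub (G j₀) (hG𝔄 j₀)).1 i
      rwa [hj₀] at this
    have hchain' : ∀ j₁ j₂ : Fin k, j₁ ≤ j₂ → ∀ i'', F' j₁ i'' ≤ F' j₂ i'' := by
      intro j₁ j₂ h12 i''
      by_cases hi'' : i'' = i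
      · rw [hi'']
        by_cases h1 : j₁ = j
        · rw [h1]
          by_cases h2 : j₂ = j
          · rw [h2]
          · rw [hF'j, hF'ne j₂ i h2]
            exact le_trans (le_of_lt hj) (hFmono j j₂ (h1 ▸ h12) i)
        · by_cases h2 : j₂ = j
          · rw [h2, hF'j, hF'ne j₁ i h1]
            exact hjmin j₁ (lt_of_le_of_ne (h2 ▸ h12) h1)
          · rw [hF'ne j₁ i h1, hF'ne j₂ i h2]
            exact hFmono j₁ j₂ h12 i
      · rw [hF'ni j₁ i'' hi'', hF'ni j₂ i'' hi'']
        exact hFmono j₁ j₂ h12 i''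
    have hmem' : ∀ j'', F' j'' ∈ 𝔄 := by
      intro j''
      by_cases hj'' : j'' = j
      · subst hj''
        refine hdown (F j) (hF𝔄 j) (F' j) ?_ ?_ ?_
        · intro i''
          by_cases h : i'' = i
          · rw [h, hF'j]; exact haA
          · rw [hF'ni j i'' h]; exact (hsub (F j) (hF𝔄 j)).1 i''
        · intro i₁ i₂ hr
          by_cases h1 : i₁ = i
          · by_cases h2 : i₂ = i
            · rw [h1, h2]
            · rw [h1, hF'j, hF'ni j i₂ h2]
              refine le_trans (le_of_lt hj) ((hsub (F j) (hF𝔄 j)).2 i i₂ ?_)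
              rw [← h1]; exact hr
          · by_cases h2 : i₂ = i
            · rw [hF'ni j i₁ h1, h2, hF'j]
              have h₁₂ : i₁ ≤ i := by rw [← h2]; exact hcompat i₁ i₂ hr
              have hlt' : i₁ < i := lt_of_le_of_ne h₁₂ h1
              have hlt : (i₁ : ℕ) < (i : ℕ) := hlt'
              rw [hlow i₁ hlt]
              refine le_trans ((hsub (G j) (hG𝔄 j)).2 i₁ i ?_) hGja
              rw [← h2]; exact hr
            · rw [hF'ni j i₁ h1, hF'ni j i₂ h2]
              exact (hsub (F j) (hF𝔄 j)).2 i₁ i₂ hr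
        · intro i''
          by_cases h : i'' = i
          · rw [h, hF'j]
            exact le_of_lt hj
          · rw [hF'ni j i'' h]
      · have heq : F' j'' = F j'' := funext fun i'' => hF'ne j'' i'' hj''
        rw [heq]; exact hF𝔄 j''
    have hjmemfil : j ∈ Finset.univ.filter (fun j' => F j' i = F j i) := by simp
    have hDV' : Stmt9Aux.DV F' = d + Finsupp.single ((i, a) : Fin m × Fin n) 1
        - Finsupp.single ((i, F j i) : Fin m × Fin n) 1 := by
      ext x
      obtain ⟨i₂, a₂⟩ := x
      rw [Finsupp.tsub_apply, Finsupp.add_apply, Stmt9Aux.DV_apply, hdcard,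
        Finsupp.single_apply, Finsupp.single_apply]
      by_cases hi₂ : i₂ = i
      · rw [hi₂]
        by_cases ha₂ : a₂ = a
        · rw [ha₂]
          rw [if_pos rfl, if_neg (fun h => hane (congrArg Prod.snd h).symm)]
          have hins : (Finset.univ.filter fun j' => F' j' i = a)
              = insert j (Finset.univ.filter fun j' => F j' i = a) := by
            ext j'
            simp only [Finset.mem_insert, Finset.mem_filter, Finset.mem_univ, true_and]
            by_cases h : j' = j
            · rw [h, hF'j]; simp [h]
            · rw [hF'ne j' i h]; simp [h]
          rw [hins, Finset.card_insert_of_notMem (by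
            simp only [Finset.mem_filter, Finset.mem_univ, true_and]
            exact fun hc => hane hc.symm)]
          omega
        · by_cases ha₂' : a₂ = F j i
          · rw [ha₂']
            rw [if_neg (fun h => hane (congrArg Prod.snd h)), if_pos rfl]
            have hers : (Finset.univ.filter fun j' => F' j' i = F j i)
                = (Finset.univ.filter fun j' => F j' i = F j i).erase j := by
              ext j'
              simp only [Finset.mem_erase, Finset.mem_filter, Finset.mem_univ, true_and]
              by_cases h : j' = j
              · rw [h, hF'j]
                exact iff_of_false hane (fun hh => hh.1 rfl)
              · rw [hF'ne j' i h]; simp [h]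
            rw [hers, Finset.card_erase_of_mem hjmemfil]
            have hpos : 0 < (Finset.univ.filter fun j' => F j' i = F j i).card :=
              Finset.card_pos.mpr ⟨j, hjmemfil⟩
            omega
          · rw [if_neg (fun h => ha₂ (congrArg Prod.snd h).symm),
              if_neg (fun h => ha₂' (congrArg Prod.snd h).symm)]
            have heqf : (Finset.univ.filter fun j' => F' j' i = a₂)
                = (Finset.univ.filter fun j' => F j' i = a₂) := by
              ext j'
              simp only [Finset.mem_filter, Finset.mem_univ, true_and]
              by_cases h : j' = j
              · rw [h, hF'j]
                exact iff_of_false (fun hh => ha₂ hh.symm) (fun hh => ha₂' hh.symm)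
              · rw [hF'ne j' i h]
            rw [heqf]
            omega
      · rw [if_neg (fun h => hi₂ (congrArg Prod.fst h).symm),
          if_neg (fun h => hi₂ (congrArg Prod.fst h).symm)]
        have heqf : (Finset.univ.filter fun j' => F' j' i₂ = a₂)
            = (Finset.univ.filter fun j' => F j' i₂ = a₂) := by
          ext j'
          simp only [Finset.mem_filter, Finset.mem_univ, true_and]
          rw [hF'ni j' i₂ hi₂]
        rw [heqf]
        omega
    rw [← hDV']
    exact (hmin _).mpr ⟨F', hmem', hchain', rfl⟩
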